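/- The derivative of the cofactor map on 3×3 matrices is given by the tensor cross product: the Fréchet derivative of A ↦ cof A at A in direction B equals A × B, where (A × B)_{ij} = ε_{ikl} ε_{jmn} A_{km} B_{ln}. -/

import Mathlib

/-- The Levi-Civita permutation symbol on `{0,1,2}`. -/
noncomputable def eps (i j k : Fin 3) : ℝ :=
  if (i, j, k) = (0, 1, 2) ∨ (i, j, k) = (1, 2, 0) ∨ (i, j, k) = (2, 0, 1) then 1
  else if (i, j, k) = (0, 2, 1) ∨ (i, j, k) = (2, 1, 0) ∨ (i, j, k) = (1, 0, 2) then -1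
  else 0

/-- The tensor cross product `(A × B)_{ij} = ε_{ikl} ε_{jmn} A_{km} B_{ln}`. -/
noncomputable def tcross (A B : Matrix (Fin 3) (Fin 3) ℝ) : Matrix (Fin 3) (Fin 3) ℝ :=
  fun i j => ∑ k, ∑ l, ∑ m, ∑ n, eps i k l * eps j m n * A k m * B l n

lemma fin3_mk_two : (⟨2, by norm_num⟩ : Fin 3) = 2 := rfl

lemma aff_mul (a b c d : ℝ) : HasDerivAt (fun t : ℝ => (a + t * b) * (c + t * d)) (a * d + b * c) 0 := by
  have h1 : HasDerivAt (fun t : ℝ => a + t * b) b 0 := by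
    simpa using ((hasDerivAt_id (0:ℝ)).mul_const b).const_add a
  have h2 : HasDerivAt (fun t : ℝ => c + t * d) d 0 := by
    simpa using ((hasDerivAt_id (0:ℝ)).mul_const d).const_add c
  have : HasDerivAt (fun t : ℝ => (a + t * b) * (c + t * d)) (b * (c + 0 * d) + (a + 0 * b) * d) 0 := h1.mul h2
  simpa using by convert this using 1; ring

lemma key (a b c d e f g h v : ℝ) (hv : v = a * d + b * c - (e * h + f * g)) :
    HasDerivAt (fun t : ℝ => (a + t * b) * (c + t * d) - (e + t * f) * (g + t * h)) v 0 := by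
  subst hv; exact (aff_mul a b c d).sub (aff_mul e f g h)

lemma key' (a b c d e f g h v : ℝ) (hv : v = -(a * d + b * c) + (e * h + f * g)) :
    HasDerivAt (fun t : ℝ => -((a + t * b) * (c + t * d)) + (e + t * f) * (g + t * h)) v 0 := by
  subst hv; exact (aff_mul a b c d).neg.add (aff_mul e f g h)

open Matrix in
/-- The derivative of the cofactor map `A ↦ cof A` at `A` in direction `B` is the
tensor cross product `A × B`:  `d/dt|_{t=0} cof (A + t B) = A × B` (entrywise). -/
theorem cof_deriv (A B : Matrix (Fin 3) (Fin 3) ℝ) (i j : Fin 3) :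
    HasDerivAt (fun t : ℝ => (Matrix.adjugate (A + t • B))ᵀ i j) (tcross A B i j) 0 := by
  fin_cases i <;> fin_cases j <;>
    simp only [Matrix.transpose_apply, Matrix.adjugate_fin_three, Matrix.add_apply,
      Matrix.smul_apply, smul_eq_mul, Matrix.of_apply, Fin.mk_zero, Fin.mk_one, fin3_mk_two,
      Matrix.cons_val_zero, Matrix.cons_val_one, Matrix.head_cons, Matrix.head_fin_const,
      Matrix.cons_val_two, Matrix.tail_cons] <;>
    first
      | exact key _ _ _ _ _ _ _ _ _ (by simp [tcross, eps, Fin.sum_univ_three]; ring)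
      | exact key' _ _ _ _ _ _ _ _ _ (by simp [tcross, eps, Fin.sum_univ_three]; ring)
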